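/- The bogus stop-bottom-up scheme is the deep identity: define stop_bu(s) recursively as Choice (All (stop_bu s)) s; then for every strategy s and every term t, stop_bu(s) applied to t evaluates to some t, and to no other result. -/

import Mathlib

inductive Term where
  | Node : String → List Term → Term

inductive Strategy where
  | Id : Strategy
  | Fail : Strategy
  | Seq : Strategy → Strategy → Strategy
  | Choice : Strategy → Strategy → Strategy
  | All : Strategy → Strategy
  | One : Strategy → Strategy

inductive eval : Strategy → Term → Option Term → Prop where
  | id : ∀ t, eval .Id t (some t)
  | fail : ∀ t, eval .Fail t none
  | seq_fail : ∀ {s s' : Strategy} {t : Term},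
      eval s t none → eval (.Seq s s') t none
  | seq_ok : ∀ {s s' : Strategy} {t t' : Term} {r : Option Term},
      eval s t (some t') → eval s' t' r → eval (.Seq s s') t r
  | choice_ok : ∀ {s s' : Strategy} {t t' : Term},
      eval s t (some t') → eval (.Choice s s') t (some t')
  | choice_fail : ∀ {s s' : Strategy} {t : Term} {r : Option Term},
      eval s t none → eval s' t r → eval (.Choice s s') t r
  | all_ok : ∀ {s : Strategy} {c : String} {ts ts' : List Term},
      ts'.length = ts.length →
      (∀ i (hi : i < ts.length) (hi' : i < ts'.length),
        eval s (ts.get ⟨i, hi⟩) (some (ts'.get ⟨i, hi'⟩))) →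
      eval (.All s) (.Node c ts) (some (.Node c ts'))
  | all_fail : ∀ {s : Strategy} {c : String} {ts : List Term} {t : Term},
      t ∈ ts → eval s t none → eval (.All s) (.Node c ts) none
  | one_ok : ∀ {s : Strategy} {c : String} {ts : List Term} {t' : Term} {i : ℕ}
      (hi : i < ts.length),
      eval s (ts.get ⟨i, hi⟩) (some t') →
      (∀ j (hj : j < i), eval s (ts.get ⟨j, Nat.lt_trans hj hi⟩) none) →
      eval (.One s) (.Node c ts) (some (.Node c (ts.set i t')))
  | one_fail : ∀ {s : Strategy} {c : String} {ts : List Term},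
      (∀ t ∈ ts, eval s t none) → eval (.One s) (.Node c ts) none

inductive evalStopBu (s : Strategy) : Term → Option Term → Prop where
  | all_ok : ∀ {c : String} {ts ts' : List Term},
      ts'.length = ts.length →
      (∀ i (hi : i < ts.length) (hi' : i < ts'.length),
        evalStopBu s (ts.get ⟨i, hi⟩) (some (ts'.get ⟨i, hi'⟩))) →
      evalStopBu s (.Node c ts) (some (.Node c ts'))
  | all_fail : ∀ {c : String} {ts : List Term} {t : Term} {r : Option Term},
      t ∈ ts → evalStopBu s t none →
      eval s (.Node c ts) r →
      evalStopBu s (.Node c ts) r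

theorem stmt18 : ∀ (s : Strategy) (t : Term),
    evalStopBu s t (some t) ∧ ∀ r : Option Term, evalStopBu s t r → r = some t := by
  intro s t
  induction t using Term.rec
    (motive_2 := fun l => ∀ t ∈ l,
      evalStopBu s t (some t) ∧ ∀ r : Option Term, evalStopBu s t r → r = some t) with
  | Node c ts ih =>
    constructor
    · exact .all_ok rfl (fun i hi hi' => (ih _ (ts.get_mem ⟨i, hi⟩)).1)
    · intro r hr
      cases hr with
      | all_ok hlen hpt =>
        rename_i ts'
        have : ts' = ts := by
          apply List.ext_get hlen
          intro i h1 h2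
          have := (ih _ (ts.get_mem ⟨i, h2⟩)).2 _ (hpt i h2 h1)
          simpa using this
        rw [this]
      | all_fail hmem hnone _ =>
        exact absurd ((ih _ hmem).2 _ hnone) (by simp)
  | nil => simp_all
  | cons hd tl ihh iht =>
    rename_i t h
    rcases List.mem_cons.mp h with h | h
    · exact h ▸ ihh
    · exact iht t h
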